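/- (Lemma 2, upper bound.) For all D, D_s ≥ 0 at which R_WZ^X(D) and R_WZ^S(D_s) are finite, R_WZ(D, D_s) ≤ R_WZ^X(D) + R_WZ^S(D_s). -/

import Mathlib

open scoped BigOperators

namespace Stmt5

variable {𝒮 𝒳 𝒴 Sh Xh : Type}

/-- Marginal pmf of the observation `X` under the joint pmf `p` on `𝒮 × 𝒳 × 𝒴`. -/
noncomputable def pXm [Fintype 𝒮] [Fintype 𝒴] (p : 𝒮 × 𝒳 × 𝒴 → ℝ) : 𝒳 → ℝ :=
  fun x => ∑ s, ∑ y, p (s, x, y)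

/-- Marginal pmf of the side information `Y`. -/
noncomputable def pYm [Fintype 𝒮] [Fintype 𝒳] (p : 𝒮 × 𝒳 × 𝒴 → ℝ) : 𝒴 → ℝ :=
  fun y => ∑ s, ∑ x, p (s, x, y)

/-- Marginal pmf of the (ℕ-valued) auxiliary variable `U`, where `q x u = P(U = u | X = x)`. -/
noncomputable def pUm [Fintype 𝒮] [Fintype 𝒳] [Fintype 𝒴] (p : 𝒮 × 𝒳 × 𝒴 → ℝ)
    (q : 𝒳 → ℕ → ℝ) : ℕ → ℝ :=
  fun u => ∑ x, pXm p x * q x u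

/-- Joint pmf of `(Y, U)` under the law `P_{SXY}·P_{U|X}`. -/
noncomputable def pYUm [Fintype 𝒮] [Fintype 𝒳] (p : 𝒮 × 𝒳 × 𝒴 → ℝ)
    (q : 𝒳 → ℕ → ℝ) : 𝒴 → ℕ → ℝ :=
  fun y u => ∑ s, ∑ x, p (s, x, y) * q x u

/-- Base-2 Shannon mutual information `I(X;U)`. -/
noncomputable def IXU [Fintype 𝒮] [Fintype 𝒳] [Fintype 𝒴] (p : 𝒮 × 𝒳 × 𝒴 → ℝ)
    (q : 𝒳 → ℕ → ℝ) : ℝ :=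
  ∑ x, ∑' u, pXm p x * q x u * Real.logb 2 (q x u / pUm p q u)

/-- Base-2 Shannon mutual information `I(U;Y)`. -/
noncomputable def IUY [Fintype 𝒮] [Fintype 𝒳] [Fintype 𝒴] (p : 𝒮 × 𝒳 × 𝒴 → ℝ)
    (q : 𝒳 → ℕ → ℝ) : ℝ :=
  ∑ y, ∑' u, pYUm p q y u * Real.logb 2 (pYUm p q y u / (pYm p y * pUm p q u))

/-- Expected distortion `E[d(X, x̂(U,Y))]` on the observation. -/
noncomputable def EdX [Fintype 𝒮] [Fintype 𝒳] [Fintype 𝒴] (p : 𝒮 × 𝒳 × 𝒴 → ℝ)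
    (q : 𝒳 → ℕ → ℝ) (d : 𝒳 × Xh → ℝ) (xh : ℕ × 𝒴 → Xh) : ℝ :=
  ∑ s, ∑ x, ∑ y, ∑' u, p (s, x, y) * q x u * d (x, xh (u, y))

/-- Expected distortion `E[d_s(S, ŝ(U,Y))]` on the latent source. -/
noncomputable def EdS [Fintype 𝒮] [Fintype 𝒳] [Fintype 𝒴] (p : 𝒮 × 𝒳 × 𝒴 → ℝ)
    (q : 𝒳 → ℕ → ℝ) (ds : 𝒮 × Sh → ℝ) (sh : ℕ × 𝒴 → Sh) : ℝ :=
  ∑ s, ∑ x, ∑ y, ∑' u, p (s, x, y) * q x u * ds (s, sh (u, y))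

/-- `q` is a conditional pmf from `𝒳` to `ℕ`. -/
def IsCondPMF (q : 𝒳 → ℕ → ℝ) : Prop :=
  (∀ x u, 0 ≤ q x u) ∧ ∀ x, ∑' u, q x u = 1

/-- `(q, (x̂, ŝ))` is `(D, Ds)`-feasible. -/
def Feasible [Fintype 𝒮] [Fintype 𝒳] [Fintype 𝒴] (p : 𝒮 × 𝒳 × 𝒴 → ℝ)
    (d : 𝒳 × Xh → ℝ) (ds : 𝒮 × Sh → ℝ) (D Ds : ℝ)
    (q : 𝒳 → ℕ → ℝ) (xh : ℕ × 𝒴 → Xh) (sh : ℕ × 𝒴 → Sh) : Prop :=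
  IsCondPMF q ∧ EdX p q d xh ≤ D ∧ EdS p q ds sh ≤ Ds

/-- The indirect Wyner–Ziv rate-distortion function
`R_WZ(D, Ds) = inf { I(X;U) - I(U;Y) : (P_{U|X}, (x̂, ŝ)) is (D,Ds)-feasible }`,
with the infimum over the empty set equal to `+∞` (in `EReal`). -/
noncomputable def RWZ [Fintype 𝒮] [Fintype 𝒳] [Fintype 𝒴] (p : 𝒮 × 𝒳 × 𝒴 → ℝ)
    (d : 𝒳 × Xh → ℝ) (ds : 𝒮 × Sh → ℝ) (D Ds : ℝ) : EReal :=
  sInf { r : EReal | ∃ (q : 𝒳 → ℕ → ℝ) (xh : ℕ × 𝒴 → Xh) (sh : ℕ × 𝒴 → Sh),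
    Feasible p d ds D Ds q xh sh ∧ r = ((IXU p q - IUY p q : ℝ) : EReal) }


/-- The conventional Wyner–Ziv rate-distortion function `R_WZ^X(D)` for reconstructing the
observation `X` only (constraint `E[d(X, x̂(U,Y))] ≤ D`), over the same class of auxiliary
variables and reconstruction maps. -/
noncomputable def RWZX [Fintype 𝒮] [Fintype 𝒳] [Fintype 𝒴] (p : 𝒮 × 𝒳 × 𝒴 → ℝ)
    (d : 𝒳 × Xh → ℝ) (D : ℝ) : EReal :=
  sInf { r : EReal | ∃ (q : 𝒳 → ℕ → ℝ) (xh : ℕ × 𝒴 → Xh),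
    IsCondPMF q ∧ EdX p q d xh ≤ D ∧ r = ((IXU p q - IUY p q : ℝ) : EReal) }

/-- The conventional Wyner–Ziv rate-distortion function `R_WZ^S(Ds)` for reconstructing the
latent source `S` only (constraint `E[d_s(S, ŝ(U,Y))] ≤ Ds`). -/
noncomputable def RWZS [Fintype 𝒮] [Fintype 𝒳] [Fintype 𝒴] (p : 𝒮 × 𝒳 × 𝒴 → ℝ)
    (ds : 𝒮 × Sh → ℝ) (Ds : ℝ) : EReal :=
  sInf { r : EReal | ∃ (q : 𝒳 → ℕ → ℝ) (sh : ℕ × 𝒴 → Sh),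
    IsCondPMF q ∧ EdS p q ds sh ≤ Ds ∧ r = ((IXU p q - IUY p q : ℝ) : EReal) }


noncomputable def psi2 (f g : ℝ) : ℝ := f * Real.logb 2 (f / g) + (g - f) / Real.log 2

lemma ln2_pos : (0:ℝ) < Real.log 2 := Real.log_pos (by norm_num)

lemma psi2_zero_left (g : ℝ) : psi2 0 g = g / Real.log 2 := by
  simp [psi2]

lemma psi2_zero_zero : psi2 0 0 = 0 := by simp [psi2]

lemma psi2_nonneg {f g : ℝ} (hf : 0 ≤ f) (hg : 0 ≤ g) (h : g = 0 → f = 0) : 0 ≤ psi2 f g := by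
  rcases eq_or_lt_of_le hf with hf0 | hf0
  · rw [← hf0, psi2_zero_left]
    positivity
  · have hg0 : 0 < g := by
      rcases eq_or_lt_of_le hg with hg0 | hg0
      · exact absurd (h hg0.symm) (ne_of_gt hf0)
      · exact hg0
    have hlog : Real.log (g / f) ≤ g / f - 1 := Real.log_le_sub_one_of_pos (div_pos hg0 hf0)
    have hlgf : Real.log (g / f) = - Real.log (f / g) := by
      rw [← Real.log_inv]; congr 1; rw [inv_div]
    have h1 : 1 - g / f ≤ Real.log (f / g) := by rw [hlgf] at hlog; linarith
    have key : f - g ≤ f * Real.log (f / g) := by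
      have := mul_le_mul_of_nonneg_left h1 (le_of_lt hf0)
      have hfg : f * (1 - g / f) = f - g := by field_simp
      linarith [hfg ▸ this]
    have : psi2 f g = (f * Real.log (f / g) + (g - f)) / Real.log 2 := by
      rw [psi2, Real.logb]
      field_simp
    rw [this]
    apply div_nonneg _ (le_of_lt ln2_pos)
    linarith

lemma psi2_smul {f g : ℝ} (c : ℝ) (hc : 0 ≤ c) : psi2 (c * f) (c * g) = c * psi2 f g := by
  rcases eq_or_lt_of_le hc with hc0 | hc0
  · rw [← hc0]; simp [psi2]
  · rw [psi2, psi2, mul_div_mul_left _ _ (ne_of_gt hc0)]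
    field_simp

lemma psi2_le {f g C : ℝ} (hf : 0 ≤ f) (h : 0 < f → 0 < g ∧ f ≤ C * g) :
    psi2 f g ≤ f * Real.logb 2 C + g / Real.log 2 := by
  rcases eq_or_lt_of_le hf with hf0 | hf0
  · rw [← hf0, psi2_zero_left]; simp
  · obtain ⟨hg, hC⟩ := h hf0
    have hfg : 0 < f / g := div_pos hf0 hg
    have hfgC : f / g ≤ C := (div_le_iff₀ hg).mpr (by linarith [hC])
    have hlog : Real.logb 2 (f / g) ≤ Real.logb 2 C :=
      Real.logb_le_logb_of_le (by norm_num) hfg hfgC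
    have h2 : f * Real.logb 2 (f / g) ≤ f * Real.logb 2 C :=
      mul_le_mul_of_nonneg_left hlog hf
    have h3 : (g - f) / Real.log 2 ≤ g / Real.log 2 := by
      exact (div_le_div_iff_of_pos_right ln2_pos).mpr (by linarith)
    rw [psi2]
    linarith

lemma psi2_diff {f g g' : ℝ} (hf : 0 ≤ f) (h : 0 < f → 0 < g ∧ 0 < g') :
    psi2 f g' - psi2 f g = f * Real.logb 2 (g / g') + (g' - g) / Real.log 2 := by
  rcases eq_or_lt_of_le hf with hf0 | hf0
  · rw [← hf0, psi2_zero_left, psi2_zero_left]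
    rw [zero_mul, zero_add]
    ring
  · obtain ⟨hg, hg'⟩ := h hf0
    rw [psi2, psi2,
      Real.logb_div (ne_of_gt hf0) (ne_of_gt hg'),
      Real.logb_div (ne_of_gt hf0) (ne_of_gt hg),
      Real.logb_div (ne_of_gt hg) (ne_of_gt hg')]
    ring

lemma psi2_tensor {w q1 q2 c1 c2 : ℝ} (hw : 0 ≤ w) (h1 : 0 ≤ q1) (h2 : 0 ≤ q2)
    (hc1 : 0 ≤ c1) (hc2 : 0 ≤ c2)
    (hz1 : 0 < w → 0 < q1 → 0 < c1) (hz2 : 0 < w → 0 < q2 → 0 < c2) :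
    psi2 (w * (q1 * q2)) (w * (c1 * c2)) + w / Real.log 2 * (c1 * q2)
      + w / Real.log 2 * (q1 * c2)
    = q2 * psi2 (w * q1) (w * c1) + q1 * psi2 (w * q2) (w * c2)
      + w / Real.log 2 * (c1 * c2) + w / Real.log 2 * (q1 * q2) := by
  rcases eq_or_lt_of_le hw with hw0 | hw0
  · rw [← hw0]; simp [psi2]
  rcases eq_or_lt_of_le h1 with h10 | h10
  · rw [← h10]; simp [psi2]; ring
  rcases eq_or_lt_of_le h2 with h20 | h20
  · rw [← h20]; simp [psi2]; ring
  have hc1' := hz1 hw0 h10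
  have hc2' := hz2 hw0 h20
  have e1 : w * (q1 * q2) / (w * (c1 * c2)) = (q1 / c1) * (q2 / c2) := by
    field_simp
  have e2 : w * q1 / (w * c1) = q1 / c1 := by
    rw [mul_div_mul_left _ _ (ne_of_gt hw0)]
  have e3 : w * q2 / (w * c2) = q2 / c2 := by
    rw [mul_div_mul_left _ _ (ne_of_gt hw0)]
  rw [psi2, psi2, psi2, e1, e2, e3,
    Real.logb_mul (ne_of_gt (div_pos h10 hc1')) (ne_of_gt (div_pos h20 hc2'))]
  field_simp
  ring
section Toolkit

variable [Fintype 𝒮] [Fintype 𝒳] [Fintype 𝒴]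

/-- Joint pmf of `(X,Y)`. -/
noncomputable def Wm (p : 𝒮 × 𝒳 × 𝒴 → ℝ) (x : 𝒳) (y : 𝒴) : ℝ := ∑ s, p (s, x, y)

/-- Conditional pmf of `U` given `Y`. -/
noncomputable def cC (p : 𝒮 × 𝒳 × 𝒴 → ℝ) (q : 𝒳 → ℕ → ℝ) (y : 𝒴) (u : ℕ) : ℝ :=
  pYUm p q y u / pYm p y

variable {p : 𝒮 × 𝒳 × 𝒴 → ℝ} {q : 𝒳 → ℕ → ℝ}

section Basic

variable (hp0 : ∀ z, 0 ≤ p z) (hq : IsCondPMF q)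
include hp0 hq
omit hq in
lemma Wm_nonneg (x : 𝒳) (y : 𝒴) : 0 ≤ Wm p x y :=
  Finset.sum_nonneg fun s _ => hp0 _

omit hp0 hq in
lemma pXm_eq (x : 𝒳) : pXm p x = ∑ y, Wm p x y := by
  rw [pXm]; rw [Finset.sum_comm]; rfl

omit hp0 hq in
lemma pYm_eq (y : 𝒴) : pYm p y = ∑ x, Wm p x y := by
  rw [pYm]; rw [Finset.sum_comm]; rfl

omit hp0 hq in
lemma pYUm_eq (y : 𝒴) (u : ℕ) : pYUm p q y u = ∑ x, Wm p x y * q x u := by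
  rw [pYUm, Finset.sum_comm]
  simp [Wm, Finset.sum_mul]

omit hq in
lemma pXm_nonneg (x : 𝒳) : 0 ≤ pXm p x :=
  Finset.sum_nonneg fun _ _ => Finset.sum_nonneg fun _ _ => hp0 _

omit hq in
lemma pYm_nonneg (y : 𝒴) : 0 ≤ pYm p y :=
  Finset.sum_nonneg fun _ _ => Finset.sum_nonneg fun _ _ => hp0 _

omit hq in
lemma Wm_le_pXm (x : 𝒳) (y : 𝒴) : Wm p x y ≤ pXm p x := by
  rw [pXm_eq]
  exact Finset.single_le_sum (fun y' _ => Wm_nonneg hp0 x y') (Finset.mem_univ y)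

omit hq in
lemma Wm_le_pYm (x : 𝒳) (y : 𝒴) : Wm p x y ≤ pYm p y := by
  rw [pYm_eq]
  exact Finset.single_le_sum (fun x' _ => Wm_nonneg hp0 x' y) (Finset.mem_univ x)

omit hp0 in
lemma summable_q (x : 𝒳) : Summable (q x) := by
  by_contra h
  have := tsum_eq_zero_of_not_summable h
  rw [hq.2 x] at this
  norm_num at this

omit hp0 in
lemma q_le_one (x : 𝒳) (u : ℕ) : q x u ≤ 1 := by
  rw [← hq.2 x]
  exact Summable.le_tsum (summable_q hq x) u fun u' _ => hq.1 x u'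

lemma pUm_nonneg (u : ℕ) : 0 ≤ pUm p q u :=
  Finset.sum_nonneg fun x _ => mul_nonneg (pXm_nonneg hp0 x) (hq.1 x u)

lemma pYUm_nonneg (y : 𝒴) (u : ℕ) : 0 ≤ pYUm p q y u := by
  rw [pYUm_eq]
  exact Finset.sum_nonneg fun x _ => mul_nonneg (Wm_nonneg hp0 x y) (hq.1 x u)

lemma cC_nonneg (y : 𝒴) (u : ℕ) : 0 ≤ cC p q y u :=
  div_nonneg (pYUm_nonneg hp0 hq y u) (pYm_nonneg hp0 y)

omit hp0 in
lemma summable_pUm : Summable (pUm p q) :=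
  summable_sum fun x _ => (summable_q hq x).mul_left _

lemma summable_pYUm (y : 𝒴) : Summable (pYUm p q y) := by
  have : Summable fun u => ∑ x, Wm p x y * q x u :=
    summable_sum fun x _ => (summable_q hq x).mul_left _
  exact this.congr fun u => (pYUm_eq y u).symm

lemma summable_cC (y : 𝒴) : Summable (cC p q y) :=
  (summable_pYUm hp0 hq y).div_const _

lemma aq_le_pUm (x : 𝒳) (u : ℕ) : pXm p x * q x u ≤ pUm p q u :=
  Finset.single_le_sum (fun x' _ => mul_nonneg (pXm_nonneg hp0 x') (hq.1 x' u))
    (Finset.mem_univ x)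

lemma wq_le_pYUm (x : 𝒳) (y : 𝒴) (u : ℕ) : Wm p x y * q x u ≤ pYUm p q y u := by
  rw [pYUm_eq]
  exact Finset.single_le_sum (fun x' _ => mul_nonneg (Wm_nonneg hp0 x' y) (hq.1 x' u))
    (Finset.mem_univ x)

lemma pYUm_le_pUm (y : 𝒴) (u : ℕ) : pYUm p q y u ≤ pUm p q u := by
  rw [pYUm_eq, pUm]
  exact Finset.sum_le_sum fun x _ =>
    mul_le_mul_of_nonneg_right (Wm_le_pXm hp0 x y) (hq.1 x u)

lemma pYUm_le_pYm (y : 𝒴) (u : ℕ) : pYUm p q y u ≤ pYm p y := by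
  rw [pYUm_eq, pYm_eq]
  exact Finset.sum_le_sum fun x _ => by
    have := mul_le_mul_of_nonneg_left (q_le_one hq x u) (Wm_nonneg hp0 x y)
    simpa using this

lemma tsum_pYUm (y : 𝒴) : ∑' u, pYUm p q y u = pYm p y := by
  have h1 : ∀ u, pYUm p q y u = ∑ x, Wm p x y * q x u := fun u => pYUm_eq y u
  rw [tsum_congr h1, Summable.tsum_finsetSum fun x _ => (summable_q hq x).mul_left _, pYm_eq]
  congr 1
  ext x
  rw [tsum_mul_left, hq.2 x, mul_one]

lemma tsum_cC {y : 𝒴} (hb : 0 < pYm p y) : ∑' u, cC p q y u = 1 := by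
  simp only [cC]; rw [tsum_div_const, tsum_pYUm hp0 hq, div_self (ne_of_gt hb)]

lemma bc_eq_pYUm (y : 𝒴) (u : ℕ) : pYm p y * cC p q y u = pYUm p q y u := by
  rcases eq_or_lt_of_le (pYm_nonneg hp0 y) with hb | hb
  · have hr : pYUm p q y u = 0 :=
      le_antisymm (by rw [hb]; exact pYUm_le_pYm hp0 hq y u) (pYUm_nonneg hp0 hq y u)
    rw [← hb, hr, zero_mul]
  · rw [cC, mul_div_cancel₀ _ (ne_of_gt hb)]

end Basic
end Toolkit

section MI

variable [Fintype 𝒮] [Fintype 𝒳] [Fintype 𝒴]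

/-- The objective functional in relative-entropy form. -/
noncomputable def Gr (p : 𝒮 × 𝒳 × 𝒴 → ℝ) (q : 𝒳 → ℕ → ℝ) : ℝ :=
  ∑ x, ∑ y, ∑' u, psi2 (Wm p x y * q x u) (Wm p x y * cC p q y u)

variable {p : 𝒮 × 𝒳 × 𝒴 → ℝ} {q : 𝒳 → ℕ → ℝ}
variable (hp0 : ∀ z, 0 ≤ p z) (hp1 : ∑ z : 𝒮 × 𝒳 × 𝒴, p z = 1) (hq : IsCondPMF q)

omit hp1 in
include hp0 hq in
lemma psiX_nonneg (x : 𝒳) (u : ℕ) :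
    0 ≤ psi2 (pXm p x * q x u) (pXm p x * pUm p q u) := by
  apply psi2_nonneg (mul_nonneg (pXm_nonneg hp0 x) (hq.1 x u))
    (mul_nonneg (pXm_nonneg hp0 x) (pUm_nonneg hp0 hq u))
  intro hg0
  rcases mul_eq_zero.mp hg0 with h | h
  · rw [h, zero_mul]
  · have h1 := aq_le_pUm hp0 hq x u
    have h2 := mul_nonneg (pXm_nonneg hp0 x) (hq.1 x u)
    rw [h] at h1
    linarith

omit hp1 in
include hp0 hq in
lemma summable_psiX (x : 𝒳) :
    Summable (fun u => psi2 (pXm p x * q x u) (pXm p x * pUm p q u)) := by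
  apply Summable.of_nonneg_of_le (psiX_nonneg hp0 hq x)
    (g := fun u => psi2 (pXm p x * q x u) (pXm p x * pUm p q u))
    (f := fun u => (pXm p x * q x u) * Real.logb 2 (1 / pXm p x)
      + (pXm p x * pUm p q u) / Real.log 2)
  · intro u
    apply psi2_le (mul_nonneg (pXm_nonneg hp0 x) (hq.1 x u))
    intro hf
    have ha : 0 < pXm p x := by
      rcases eq_or_lt_of_le (pXm_nonneg hp0 x) with h | h
      · rw [← h, zero_mul] at hf; exact absurd hf (lt_irrefl 0)
      · exact h
    have hqu : 0 < q x u := by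
      by_contra h
      have : q x u = 0 := le_antisymm (not_lt.mp h) (hq.1 x u)
      rw [this, mul_zero] at hf; exact absurd hf (lt_irrefl 0)
    have hm : 0 < pUm p q u := lt_of_lt_of_le (mul_pos ha hqu) (aq_le_pUm hp0 hq x u)
    constructor
    · exact mul_pos ha hm
    · rw [one_div, ← mul_assoc, inv_mul_cancel₀ (ne_of_gt ha), one_mul]
      exact aq_le_pUm hp0 hq x u
  · exact Summable.add (((summable_q hq x).mul_left _).mul_right _)
      (((summable_pUm hq).mul_left _).div_const _)

omit hp1 in
include hp0 hq in
lemma psiY_nonneg (y : 𝒴) (u : ℕ) :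
    0 ≤ psi2 (pYUm p q y u) (pYm p y * pUm p q u) := by
  apply psi2_nonneg (pYUm_nonneg hp0 hq y u)
    (mul_nonneg (pYm_nonneg hp0 y) (pUm_nonneg hp0 hq u))
  intro hg0
  rcases mul_eq_zero.mp hg0 with h | h
  · have h1 := pYUm_le_pYm hp0 hq y u
    rw [h] at h1
    linarith [pYUm_nonneg hp0 hq y u]
  · have h1 := pYUm_le_pUm hp0 hq y u
    rw [h] at h1
    linarith [pYUm_nonneg hp0 hq y u]

omit hp1 in
include hp0 hq in
lemma summable_psiY (y : 𝒴) :
    Summable (fun u => psi2 (pYUm p q y u) (pYm p y * pUm p q u)) := by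
  apply Summable.of_nonneg_of_le (psiY_nonneg hp0 hq y)
    (f := fun u => pYUm p q y u * Real.logb 2 (1 / pYm p y)
      + (pYm p y * pUm p q u) / Real.log 2)
  · intro u
    apply psi2_le (pYUm_nonneg hp0 hq y u)
    intro hf
    have hb : 0 < pYm p y := lt_of_lt_of_le hf (pYUm_le_pYm hp0 hq y u)
    have hm : 0 < pUm p q u := lt_of_lt_of_le hf (pYUm_le_pUm hp0 hq y u)
    constructor
    · exact mul_pos hb hm
    · rw [one_div, ← mul_assoc, inv_mul_cancel₀ (ne_of_gt hb), one_mul]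
      exact pYUm_le_pUm hp0 hq y u
  · exact Summable.add ((summable_pYUm hp0 hq y).mul_right _)
      (((summable_pUm hq).mul_left _).div_const _)

omit hp0 hq in
include hp1 in
lemma sum_pXm : ∑ x, pXm p x = 1 := by
  rw [← hp1]
  simp only [pXm, Fintype.sum_prod_type]
  rw [Finset.sum_comm]

omit hp0 in
include hp1 hq in
lemma tsum_pUm : ∑' u, pUm p q u = 1 := by
  simp only [pUm]
  rw [Summable.tsum_finsetSum fun x _ => (summable_q hq x).mul_left _]
  rw [← sum_pXm hp1]
  congr 1
  ext x
  rw [tsum_mul_left, hq.2 x, mul_one]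

include hp0 hp1 hq in
lemma IXU_eq : IXU p q
    = ∑ x, ∑' u, psi2 (pXm p x * q x u) (pXm p x * pUm p q u) := by
  rw [IXU]
  congr 1
  ext x
  have hpt : ∀ u, pXm p x * q x u * Real.logb 2 (q x u / pUm p q u)
      = psi2 (pXm p x * q x u) (pXm p x * pUm p q u)
        - (pXm p x * pUm p q u - pXm p x * q x u) / Real.log 2 := by
    intro u
    rcases eq_or_lt_of_le (pXm_nonneg hp0 x) with ha | ha
    · rw [← ha]; simp [psi2]
    · rw [psi2, mul_div_mul_left _ _ (ne_of_gt ha)]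
      ring
  rw [tsum_congr hpt]
  rw [Summable.tsum_sub (summable_psiX hp0 hq x)
    ((((summable_pUm hq).mul_left _).sub ((summable_q hq x).mul_left _)).div_const _)]
  have : ∑' u, (pXm p x * pUm p q u - pXm p x * q x u) / Real.log 2 = 0 := by
    rw [tsum_div_const]
    rw [Summable.tsum_sub ((summable_pUm hq).mul_left _) ((summable_q hq x).mul_left _)]
    rw [tsum_mul_left, tsum_mul_left, tsum_pUm hp1 hq, hq.2 x]
    simp
  rw [this, sub_zero]

include hp0 hp1 hq in
lemma IUY_eq : IUY p q
    = ∑ y, ∑' u, psi2 (pYUm p q y u) (pYm p y * pUm p q u) := by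
  rw [IUY]
  congr 1
  ext y
  have hpt : ∀ u, pYUm p q y u * Real.logb 2 (pYUm p q y u / (pYm p y * pUm p q u))
      = psi2 (pYUm p q y u) (pYm p y * pUm p q u)
        - (pYm p y * pUm p q u - pYUm p q y u) / Real.log 2 := by
    intro u
    rw [psi2]; ring
  rw [tsum_congr hpt]
  rw [Summable.tsum_sub (summable_psiY hp0 hq y)
    ((((summable_pUm hq).mul_left _).sub (summable_pYUm hp0 hq y)).div_const _)]
  have : ∑' u, (pYm p y * pUm p q u - pYUm p q y u) / Real.log 2 = 0 := by
    rw [tsum_div_const]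
    rw [Summable.tsum_sub ((summable_pUm hq).mul_left _) (summable_pYUm hp0 hq y)]
    rw [tsum_mul_left, tsum_pUm hp1 hq, tsum_pYUm hp0 hq y]
    simp
  rw [this, sub_zero]

end MI

section MI2

variable [Fintype 𝒮] [Fintype 𝒳] [Fintype 𝒴]
variable {p : 𝒮 × 𝒳 × 𝒴 → ℝ} {q : 𝒳 → ℕ → ℝ}
variable (hp0 : ∀ z, 0 ≤ p z) (hp1 : ∑ z : 𝒮 × 𝒳 × 𝒴, p z = 1) (hq : IsCondPMF q)

lemma cC_def (y : 𝒴) (u : ℕ) : cC p q y u = pYUm p q y u / pYm p y := rfl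

include hp0 in
lemma sumx_psi_change (y : 𝒴) (Q : 𝒳 → ℝ) (M : ℝ) (hQ0 : ∀ x, 0 ≤ Q x)
    (hQM : ∀ x, 0 < Wm p x y → 0 < Q x → 0 < M) :
    ∑ x, psi2 (Wm p x y * Q x) (Wm p x y * M)
      = ∑ x, psi2 (Wm p x y * Q x)
          (Wm p x y * ((∑ x', Wm p x' y * Q x') / pYm p y))
        + psi2 (∑ x', Wm p x' y * Q x') (pYm p y * M) := by
  set R : ℝ := ∑ x', Wm p x' y * Q x' with hR
  set b : ℝ := pYm p y with hb
  set c : ℝ := R / b with hc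
  have hR0 : 0 ≤ R := Finset.sum_nonneg fun x' _ => mul_nonneg (Wm_nonneg hp0 x' y) (hQ0 x')
  have hb0 : 0 ≤ b := pYm_nonneg hp0 y
  have hWb : ∀ x, Wm p x y ≤ b := fun x => Wm_le_pYm hp0 x y
  have key : ∀ x, psi2 (Wm p x y * Q x) (Wm p x y * M)
      = psi2 (Wm p x y * Q x) (Wm p x y * c)
        + Wm p x y * Q x * Real.logb 2 (c / M)
        + (Wm p x y * M - Wm p x y * c) / Real.log 2 := by
    intro x
    rcases eq_or_lt_of_le (Wm_nonneg hp0 x y) with hW | hW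
    · rw [← hW]
      simp [psi2]
    · rcases eq_or_lt_of_le (hQ0 x) with hQx | hQx
      · rw [← hQx, mul_zero, psi2_zero_left, psi2_zero_left]
        ring
      · have hM := hQM x hW hQx
        have hRx : 0 < R := lt_of_lt_of_le (mul_pos hW hQx)
          (Finset.single_le_sum
            (fun x' _ => mul_nonneg (Wm_nonneg hp0 x' y) (hQ0 x')) (Finset.mem_univ x))
        have hbp : 0 < b := lt_of_lt_of_le hW (hWb x)
        have hcp : 0 < c := div_pos hRx hbp
        have hdiff := psi2_diff (f := Wm p x y * Q x) (g := Wm p x y * c)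
          (g' := Wm p x y * M)
          (mul_nonneg (le_of_lt hW) (hQ0 x))
          (fun _ => ⟨mul_pos hW hcp, mul_pos hW hM⟩)
        rw [mul_div_mul_left _ _ (ne_of_gt hW)] at hdiff
        linarith [hdiff]
  rw [Finset.sum_congr rfl (fun x _ => key x)]
  rw [Finset.sum_add_distrib, Finset.sum_add_distrib]
  have h2 : ∑ x, Wm p x y * Q x * Real.logb 2 (c / M) = R * Real.logb 2 (c / M) := by
    rw [← Finset.sum_mul]
  have h3 : ∑ x, (Wm p x y * M - Wm p x y * c) / Real.log 2
      = (b * M - b * c) / Real.log 2 := by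
    rw [← Finset.sum_div]
    congr 1
    rw [Finset.sum_sub_distrib, ← Finset.sum_mul, ← Finset.sum_mul, ← pYm_eq]
  have h4 : b * c = R := by
    rcases eq_or_lt_of_le hb0 with hbz | hbz
    · have hRz : R = 0 := by
        rw [hR]
        apply Finset.sum_eq_zero
        intro x' _
        have h5 : Wm p x' y = 0 :=
          le_antisymm (by rw [← hbz] at hWb; exact hWb x') (Wm_nonneg hp0 x' y)
        rw [h5, zero_mul]
      rw [hRz, hc, hRz, zero_div, mul_zero]
    · rw [hc, mul_div_cancel₀ _ (ne_of_gt hbz)]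
  have h5 : R * Real.logb 2 (c / M) + (b * M - b * c) / Real.log 2 = psi2 R (b * M) := by
    rw [psi2, hc, div_div, h4]
  rw [h2, h3, add_assoc, h5]

omit hp1 in
include hp0 hq in
lemma psiC_nonneg (x : 𝒳) (y : 𝒴) (u : ℕ) :
    0 ≤ psi2 (Wm p x y * q x u) (Wm p x y * cC p q y u) := by
  apply psi2_nonneg (mul_nonneg (Wm_nonneg hp0 x y) (hq.1 x u))
    (mul_nonneg (Wm_nonneg hp0 x y) (cC_nonneg hp0 hq y u))
  intro hg0
  rcases mul_eq_zero.mp hg0 with h | h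
  · rw [h, zero_mul]
  · have h1 : pYUm p q y u = 0 := by
      rw [← bc_eq_pYUm hp0 hq y u, h, mul_zero]
    have h2 := wq_le_pYUm hp0 hq x y u
    rw [h1] at h2
    have h3 := mul_nonneg (Wm_nonneg hp0 x y) (hq.1 x u)
    linarith

omit hp1 in
include hp0 hq in
lemma summable_psiC (x : 𝒳) (y : 𝒴) :
    Summable (fun u => psi2 (Wm p x y * q x u) (Wm p x y * cC p q y u)) := by
  apply Summable.of_nonneg_of_le (psiC_nonneg hp0 hq x y)
    (f := fun u => Wm p x y * q x u * Real.logb 2 (pYm p y / Wm p x y)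
      + Wm p x y * cC p q y u / Real.log 2)
  · intro u
    apply psi2_le (mul_nonneg (Wm_nonneg hp0 x y) (hq.1 x u))
    intro hf
    have hW : 0 < Wm p x y := by
      rcases eq_or_lt_of_le (Wm_nonneg hp0 x y) with h | h
      · rw [← h, zero_mul] at hf; exact absurd hf (lt_irrefl 0)
      · exact h
    have hqu : 0 < q x u := by
      by_contra h
      have : q x u = 0 := le_antisymm (not_lt.mp h) (hq.1 x u)
      rw [this, mul_zero] at hf; exact absurd hf (lt_irrefl 0)
    have hb : 0 < pYm p y := lt_of_lt_of_le hW (Wm_le_pYm hp0 x y)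
    have hr : 0 < pYUm p q y u := lt_of_lt_of_le hf (wq_le_pYUm hp0 hq x y u)
    have hcp : 0 < cC p q y u := by
      rw [cC_def]; exact div_pos hr hb
    constructor
    · exact mul_pos hW hcp
    · have he : pYm p y / Wm p x y * (Wm p x y * cC p q y u)
          = pYm p y * cC p q y u := by
        field_simp
      rw [he, bc_eq_pYUm hp0 hq y u]
      exact wq_le_pYUm hp0 hq x y u
  · exact Summable.add (((summable_q hq x).mul_left _).mul_right _)
      (((summable_cC hp0 hq y).mul_left _).div_const _)

omit hp1 in
include hp0 hq in
lemma psiW_nonneg (x : 𝒳) (y : 𝒴) (u : ℕ) :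
    0 ≤ psi2 (Wm p x y * q x u) (Wm p x y * pUm p q u) := by
  apply psi2_nonneg (mul_nonneg (Wm_nonneg hp0 x y) (hq.1 x u))
    (mul_nonneg (Wm_nonneg hp0 x y) (pUm_nonneg hp0 hq u))
  intro hg0
  rcases mul_eq_zero.mp hg0 with h | h
  · rw [h, zero_mul]
  · have h1 : Wm p x y * q x u ≤ pXm p x * q x u :=
      mul_le_mul_of_nonneg_right (Wm_le_pXm hp0 x y) (hq.1 x u)
    have h2 := aq_le_pUm hp0 hq x u
    rw [h] at h2
    have h3 := mul_nonneg (Wm_nonneg hp0 x y) (hq.1 x u)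
    linarith

omit hp1 in
include hp0 hq in
lemma summable_psiW (x : 𝒳) (y : 𝒴) :
    Summable (fun u => psi2 (Wm p x y * q x u) (Wm p x y * pUm p q u)) := by
  apply Summable.of_nonneg_of_le (psiW_nonneg hp0 hq x y)
    (f := fun u => Wm p x y * q x u * Real.logb 2 (1 / pXm p x)
      + Wm p x y * pUm p q u / Real.log 2)
  · intro u
    apply psi2_le (mul_nonneg (Wm_nonneg hp0 x y) (hq.1 x u))
    intro hf
    have hW : 0 < Wm p x y := by
      rcases eq_or_lt_of_le (Wm_nonneg hp0 x y) with h | h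
      · rw [← h, zero_mul] at hf; exact absurd hf (lt_irrefl 0)
      · exact h
    have hqu : 0 < q x u := by
      by_contra h
      have : q x u = 0 := le_antisymm (not_lt.mp h) (hq.1 x u)
      rw [this, mul_zero] at hf; exact absurd hf (lt_irrefl 0)
    have ha : 0 < pXm p x := lt_of_lt_of_le hW (Wm_le_pXm hp0 x y)
    have hm : 0 < pUm p q u := lt_of_lt_of_le (mul_pos ha hqu) (aq_le_pUm hp0 hq x u)
    constructor
    · exact mul_pos hW hm
    · have key : pXm p x * (Wm p x y * q x u) ≤ Wm p x y * pUm p q u := by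
        have h6 := aq_le_pUm hp0 hq x u
        calc pXm p x * (Wm p x y * q x u) = Wm p x y * (pXm p x * q x u) := by ring
          _ ≤ Wm p x y * pUm p q u :=
            mul_le_mul_of_nonneg_left h6 (Wm_nonneg hp0 x y)
      rw [one_div, inv_mul_eq_div, le_div_iff₀ ha]
      linarith [key]
  · exact Summable.add (((summable_q hq x).mul_left _).mul_right _)
      (((summable_pUm hq).mul_left _).div_const _)

end MI2

section MI3

variable [Fintype 𝒮] [Fintype 𝒳] [Fintype 𝒴]
variable {p : 𝒮 × 𝒳 × 𝒴 → ℝ} {q : 𝒳 → ℕ → ℝ}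
variable (hp0 : ∀ z, 0 ≤ p z) (hp1 : ∑ z : 𝒮 × 𝒳 × 𝒴, p z = 1) (hq : IsCondPMF q)

include hp0 in
lemma sumY_psiW (x : 𝒳) (u : ℕ) :
    ∑ y, psi2 (Wm p x y * q x u) (Wm p x y * pUm p q u)
      = psi2 (pXm p x * q x u) (pXm p x * pUm p q u) := by
  have h1 : ∀ y, psi2 (Wm p x y * q x u) (Wm p x y * pUm p q u)
      = Wm p x y * psi2 (q x u) (pUm p q u) :=
    fun y => psi2_smul _ (Wm_nonneg hp0 x y)
  rw [Finset.sum_congr rfl fun y _ => h1 y, ← Finset.sum_mul, ← pXm_eq,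
    ← psi2_smul _ (pXm_nonneg hp0 x)]

include hp0 hp1 hq in
lemma objective_eq : IXU p q - IUY p q = Gr p q := by
  rw [IXU_eq hp0 hp1 hq, IUY_eq hp0 hp1 hq]
  have step1 : ∑ x, ∑' u, psi2 (pXm p x * q x u) (pXm p x * pUm p q u)
      = ∑ x, ∑ y, ∑' u, psi2 (Wm p x y * q x u) (Wm p x y * pUm p q u) := by
    apply Finset.sum_congr rfl
    intro x _
    rw [← Summable.tsum_finsetSum fun y _ => summable_psiW hp0 hq x y]
    exact tsum_congr fun u => (sumY_psiW hp0 x u).symm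
  rw [step1, Finset.sum_comm]
  have step2 : ∀ y, ∑ x, ∑' u, psi2 (Wm p x y * q x u) (Wm p x y * pUm p q u)
      = ∑ x, ∑' u, psi2 (Wm p x y * q x u) (Wm p x y * cC p q y u)
        + ∑' u, psi2 (pYUm p q y u) (pYm p y * pUm p q u) := by
    intro y
    rw [← Summable.tsum_finsetSum fun x _ => summable_psiW hp0 hq x y]
    have hpt : ∀ u, ∑ x, psi2 (Wm p x y * q x u) (Wm p x y * pUm p q u)
        = ∑ x, psi2 (Wm p x y * q x u) (Wm p x y * cC p q y u)
          + psi2 (pYUm p q y u) (pYm p y * pUm p q u) := by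
      intro u
      have hM : ∀ x, 0 < Wm p x y → 0 < q x u → 0 < pUm p q u := by
        intro x hW hqu
        exact lt_of_lt_of_le
          (mul_pos (lt_of_lt_of_le hW (Wm_le_pXm hp0 x y)) hqu) (aq_le_pUm hp0 hq x u)
      have := sumx_psi_change hp0 y (fun x => q x u) (pUm p q u) (fun x => hq.1 x u) hM
      rw [← pYUm_eq y u] at this
      rw [this, cC_def]
    rw [tsum_congr hpt]
    rw [Summable.tsum_add (summable_sum fun x _ => summable_psiC hp0 hq x y)
      (summable_psiY hp0 hq y)]
    rw [Summable.tsum_finsetSum fun x _ => summable_psiC hp0 hq x y]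
  rw [Finset.sum_congr rfl fun y _ => step2 y, Finset.sum_add_distrib]
  rw [Gr, Finset.sum_comm]
  ring

end MI3

section Pair

variable [Fintype 𝒮] [Fintype 𝒳] [Fintype 𝒴]

/-- Product conditional pmf on `ℕ ≃ ℕ × ℕ`. -/
noncomputable def qpair (qa qb : 𝒳 → ℕ → ℝ) : 𝒳 → ℕ → ℝ :=
  fun x u => qa x (Nat.pairEquiv.symm u).1 * qb x (Nat.pairEquiv.symm u).2

/-- Joint `(Y,(U1,U2))` pmf for the product auxiliary. -/
noncomputable def Rv (p : 𝒮 × 𝒳 × 𝒴 → ℝ) (qa qb : 𝒳 → ℕ → ℝ) (y : 𝒴) (v : ℕ × ℕ) : ℝ :=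
  ∑ x, Wm p x y * (qa x v.1 * qb x v.2)

/-- Conditional `(U1,U2)` given `Y` pmf for the product auxiliary. -/
noncomputable def Cv (p : 𝒮 × 𝒳 × 𝒴 → ℝ) (qa qb : 𝒳 → ℕ → ℝ) (y : 𝒴) (v : ℕ × ℕ) : ℝ :=
  Rv p qa qb y v / pYm p y

variable {p : 𝒮 × 𝒳 × 𝒴 → ℝ} {qa qb : 𝒳 → ℕ → ℝ}
variable (hp0 : ∀ z, 0 ≤ p z) (hqa : IsCondPMF qa) (hqb : IsCondPMF qb)

lemma tsum_pair_mul {f g : ℕ → ℝ} (hf : Summable f) (hg : Summable g)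
    (hf0 : ∀ n, 0 ≤ f n) (hg0 : ∀ n, 0 ≤ g n) :
    ∑' v : ℕ × ℕ, f v.1 * g v.2 = (∑' n, f n) * ∑' n, g n :=
  (Summable.tsum_mul_tsum hf hg (hf.mul_of_nonneg hg hf0 hg0)).symm

include hqa hqb in
lemma qpair_pmf : IsCondPMF (qpair qa qb) := by
  constructor
  · intro x u
    exact mul_nonneg (hqa.1 x _) (hqb.1 x _)
  · intro x
    have h1 : ∑' u, qpair qa qb x u = ∑' v : ℕ × ℕ, qa x v.1 * qb x v.2 :=
      Equiv.tsum_eq Nat.pairEquiv.symm (fun v : ℕ × ℕ => qa x v.1 * qb x v.2)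
    rw [h1, tsum_pair_mul (summable_q hqa x) (summable_q hqb x) (hqa.1 x) (hqb.1 x),
      hqa.2 x, hqb.2 x, mul_one]

lemma pYUm_qpair (y : 𝒴) (u : ℕ) :
    pYUm p (qpair qa qb) y u = Rv p qa qb y (Nat.pairEquiv.symm u) := by
  rw [pYUm_eq, Rv]
  rfl

lemma cC_qpair (y : 𝒴) (u : ℕ) :
    cC p (qpair qa qb) y u = Cv p qa qb y (Nat.pairEquiv.symm u) := by
  rw [cC_def, pYUm_qpair, Cv]

include hp0 hqa hqb in
lemma Rv_nonneg (y : 𝒴) (v : ℕ × ℕ) : 0 ≤ Rv p qa qb y v :=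
  Finset.sum_nonneg fun x _ => mul_nonneg (Wm_nonneg hp0 x y)
    (mul_nonneg (hqa.1 x _) (hqb.1 x _))

include hp0 hqa hqb in
lemma Cv_nonneg (y : 𝒴) (v : ℕ × ℕ) : 0 ≤ Cv p qa qb y v :=
  div_nonneg (Rv_nonneg hp0 hqa hqb y v) (pYm_nonneg hp0 y)

include hp0 hqa hqb in
lemma wqq_le_Rv (x : 𝒳) (y : 𝒴) (v : ℕ × ℕ) :
    Wm p x y * (qa x v.1 * qb x v.2) ≤ Rv p qa qb y v :=
  Finset.single_le_sum (fun x' _ => mul_nonneg (Wm_nonneg hp0 x' y)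
    (mul_nonneg (hqa.1 x' _) (hqb.1 x' _))) (Finset.mem_univ x)

include hp0 hqa hqb in
lemma bCv_eq_Rv (y : 𝒴) (v : ℕ × ℕ) :
    pYm p y * Cv p qa qb y v = Rv p qa qb y v := by
  rcases eq_or_lt_of_le (pYm_nonneg hp0 y) with hb | hb
  · have hRz : Rv p qa qb y v = 0 := by
      apply Finset.sum_eq_zero
      intro x' _
      have h6 := Wm_le_pYm hp0 x' y
      rw [← hb] at h6
      have h5 : Wm p x' y = 0 := le_antisymm h6 (Wm_nonneg hp0 x' y)
      rw [h5, zero_mul]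
    rw [hRz, Cv, hRz, zero_div, mul_zero]
  · rw [Cv, mul_div_cancel₀ _ (ne_of_gt hb)]

include hp0 hqa hqb in
lemma summable_Rv (y : 𝒴) : Summable (Rv p qa qb y) := by
  apply summable_sum
  intro x _
  exact (((summable_q hqa x).mul_of_nonneg (summable_q hqb x)
    (hqa.1 x) (hqb.1 x)).mul_left _)

include hp0 hqa hqb in
lemma summable_Cv (y : 𝒴) : Summable (Cv p qa qb y) :=
  (summable_Rv hp0 hqa hqb y).div_const _

-- summability of the product-reference psi2 family
include hp0 hqa hqb in
lemma summable_psiCC (x : 𝒳) (y : 𝒴) :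
    Summable (fun v : ℕ × ℕ => psi2 (Wm p x y * (qa x v.1 * qb x v.2))
      (Wm p x y * (cC p qa y v.1 * cC p qb y v.2))) := by
  have hnn : ∀ v : ℕ × ℕ, 0 ≤ psi2 (Wm p x y * (qa x v.1 * qb x v.2))
      (Wm p x y * (cC p qa y v.1 * cC p qb y v.2)) := by
    intro v
    apply psi2_nonneg (mul_nonneg (Wm_nonneg hp0 x y)
        (mul_nonneg (hqa.1 x _) (hqb.1 x _)))
      (mul_nonneg (Wm_nonneg hp0 x y)
        (mul_nonneg (cC_nonneg hp0 hqa y v.1) (cC_nonneg hp0 hqb y v.2)))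
    intro hg0
    rcases mul_eq_zero.mp hg0 with h | h
    · rw [h, zero_mul]
    · rcases mul_eq_zero.mp h with h1 | h1
      · have h2 : pYUm p qa y v.1 = 0 := by rw [← bc_eq_pYUm hp0 hqa y v.1, h1, mul_zero]
        have h3 := wq_le_pYUm hp0 hqa x y v.1
        rw [h2] at h3
        have h4 : Wm p x y * qa x v.1 = 0 :=
          le_antisymm h3 (mul_nonneg (Wm_nonneg hp0 x y) (hqa.1 x _))
        calc Wm p x y * (qa x v.1 * qb x v.2)
            = Wm p x y * qa x v.1 * qb x v.2 := by ring
          _ = 0 := by rw [h4, zero_mul]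
      · have h2 : pYUm p qb y v.2 = 0 := by rw [← bc_eq_pYUm hp0 hqb y v.2, h1, mul_zero]
        have h3 := wq_le_pYUm hp0 hqb x y v.2
        rw [h2] at h3
        have h4 : Wm p x y * qb x v.2 = 0 :=
          le_antisymm h3 (mul_nonneg (Wm_nonneg hp0 x y) (hqb.1 x _))
        calc Wm p x y * (qa x v.1 * qb x v.2)
            = Wm p x y * qb x v.2 * qa x v.1 := by ring
          _ = 0 := by rw [h4, zero_mul]
  apply Summable.of_nonneg_of_le hnn
    (f := fun v : ℕ × ℕ => Wm p x y * (qa x v.1 * qb x v.2)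
        * Real.logb 2 (pYm p y * pYm p y / (Wm p x y * Wm p x y))
      + Wm p x y * (cC p qa y v.1 * cC p qb y v.2) / Real.log 2)
  · intro v
    apply psi2_le (mul_nonneg (Wm_nonneg hp0 x y)
      (mul_nonneg (hqa.1 x _) (hqb.1 x _)))
    intro hf
    have hW : 0 < Wm p x y := by
      rcases eq_or_lt_of_le (Wm_nonneg hp0 x y) with h | h
      · rw [← h, zero_mul] at hf; exact absurd hf (lt_irrefl 0)
      · exact h
    have hq12 : 0 < qa x v.1 * qb x v.2 := by
      by_contra h
      have h1 : qa x v.1 * qb x v.2 = 0 := le_antisymm (not_lt.mp h)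
        (mul_nonneg (hqa.1 x _) (hqb.1 x _))
      rw [h1, mul_zero] at hf; exact absurd hf (lt_irrefl 0)
    have hq1 : 0 < qa x v.1 := by
      rcases eq_or_lt_of_le (hqa.1 x v.1) with h | h
      · rw [← h, zero_mul] at hq12; exact absurd hq12 (lt_irrefl 0)
      · exact h
    have hq2 : 0 < qb x v.2 := by
      rcases eq_or_lt_of_le (hqb.1 x v.2) with h | h
      · rw [← h, mul_zero] at hq12; exact absurd hq12 (lt_irrefl 0)
      · exact h
    have hb : 0 < pYm p y := lt_of_lt_of_le hW (Wm_le_pYm hp0 x y)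
    have hr1 : 0 < pYUm p qa y v.1 :=
      lt_of_lt_of_le (mul_pos hW hq1) (wq_le_pYUm hp0 hqa x y v.1)
    have hr2 : 0 < pYUm p qb y v.2 :=
      lt_of_lt_of_le (mul_pos hW hq2) (wq_le_pYUm hp0 hqb x y v.2)
    have hc1 : 0 < cC p qa y v.1 := by rw [cC_def]; exact div_pos hr1 hb
    have hc2 : 0 < cC p qb y v.2 := by rw [cC_def]; exact div_pos hr2 hb
    constructor
    · exact mul_pos hW (mul_pos hc1 hc2)
    · -- W * (qa*qb) ≤ (b*b/(W*W)) * (W * (c1*c2))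
      rw [div_mul_eq_mul_div, le_div_iff₀ (mul_pos hW hW)]
      have e1 : Wm p x y * qa x v.1 ≤ pYm p y * cC p qa y v.1 := by
        rw [bc_eq_pYUm hp0 hqa y v.1]; exact wq_le_pYUm hp0 hqa x y v.1
      have e2 : Wm p x y * qb x v.2 ≤ pYm p y * cC p qb y v.2 := by
        rw [bc_eq_pYUm hp0 hqb y v.2]; exact wq_le_pYUm hp0 hqb x y v.2
      have e3 : (Wm p x y * qa x v.1) * (Wm p x y * qb x v.2)
          ≤ (pYm p y * cC p qa y v.1) * (pYm p y * cC p qb y v.2) :=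
        mul_le_mul e1 e2 (mul_nonneg (le_of_lt hW) (hqb.1 x _))
          (mul_nonneg (le_of_lt hb) (le_of_lt hc1))
      calc Wm p x y * (qa x v.1 * qb x v.2) * (Wm p x y * Wm p x y)
          = (Wm p x y * qa x v.1) * (Wm p x y * qb x v.2) * Wm p x y := by ring
        _ ≤ (pYm p y * cC p qa y v.1) * (pYm p y * cC p qb y v.2) * Wm p x y :=
          mul_le_mul_of_nonneg_right e3 (le_of_lt hW)
        _ = pYm p y * pYm p y * (Wm p x y * (cC p qa y v.1 * cC p qb y v.2)) := by ring
  · apply Summable.add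
    · exact ((((summable_q hqa x).mul_of_nonneg (summable_q hqb x)
        (hqa.1 x) (hqb.1 x)).mul_left _).mul_right _)
    · exact ((((summable_cC hp0 hqa y).mul_of_nonneg (summable_cC hp0 hqb y)
        (cC_nonneg hp0 hqa y) (cC_nonneg hp0 hqb y)).mul_left _).div_const _)

include hp0 hqa hqb in
lemma summable_psiCv (x : 𝒳) (y : 𝒴) :
    Summable (fun v : ℕ × ℕ => psi2 (Wm p x y * (qa x v.1 * qb x v.2))
      (Wm p x y * Cv p qa qb y v)) := by
  have hnn : ∀ v : ℕ × ℕ, 0 ≤ psi2 (Wm p x y * (qa x v.1 * qb x v.2))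
      (Wm p x y * Cv p qa qb y v) := by
    intro v
    apply psi2_nonneg (mul_nonneg (Wm_nonneg hp0 x y)
        (mul_nonneg (hqa.1 x _) (hqb.1 x _)))
      (mul_nonneg (Wm_nonneg hp0 x y) (Cv_nonneg hp0 hqa hqb y v))
    intro hg0
    rcases mul_eq_zero.mp hg0 with h | h
    · rw [h, zero_mul]
    · have h2 : Rv p qa qb y v = 0 := by rw [← bCv_eq_Rv hp0 hqa hqb y v, h, mul_zero]
      have h3 := wqq_le_Rv hp0 hqa hqb x y v
      rw [h2] at h3
      exact le_antisymm h3 (mul_nonneg (Wm_nonneg hp0 x y)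
        (mul_nonneg (hqa.1 x _) (hqb.1 x _)))
  apply Summable.of_nonneg_of_le hnn
    (f := fun v : ℕ × ℕ => Wm p x y * (qa x v.1 * qb x v.2)
        * Real.logb 2 (pYm p y / Wm p x y)
      + Wm p x y * Cv p qa qb y v / Real.log 2)
  · intro v
    apply psi2_le (mul_nonneg (Wm_nonneg hp0 x y)
      (mul_nonneg (hqa.1 x _) (hqb.1 x _)))
    intro hf
    have hW : 0 < Wm p x y := by
      rcases eq_or_lt_of_le (Wm_nonneg hp0 x y) with h | h
      · rw [← h, zero_mul] at hf; exact absurd hf (lt_irrefl 0)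
      · exact h
    have hb : 0 < pYm p y := lt_of_lt_of_le hW (Wm_le_pYm hp0 x y)
    have hRv : 0 < Rv p qa qb y v := lt_of_lt_of_le hf (wqq_le_Rv hp0 hqa hqb x y v)
    have hCv : 0 < Cv p qa qb y v := by rw [Cv]; exact div_pos hRv hb
    constructor
    · exact mul_pos hW hCv
    · have he : pYm p y / Wm p x y * (Wm p x y * Cv p qa qb y v)
          = pYm p y * Cv p qa qb y v := by
        field_simp
      rw [he, bCv_eq_Rv hp0 hqa hqb y v]
      exact wqq_le_Rv hp0 hqa hqb x y v
  · apply Summable.add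
    · exact ((((summable_q hqa x).mul_of_nonneg (summable_q hqb x)
        (hqa.1 x) (hqb.1 x)).mul_left _).mul_right _)
    · exact (((summable_Cv hp0 hqa hqb y).mul_left _).div_const _)

end Pair

section Pair2

variable [Fintype 𝒮] [Fintype 𝒳] [Fintype 𝒴]
variable {p : 𝒮 × 𝒳 × 𝒴 → ℝ} {qa qb : 𝒳 → ℕ → ℝ}
variable (hp0 : ∀ z, 0 ≤ p z) (hqa : IsCondPMF qa) (hqb : IsCondPMF qb)

include hp0 hqa hqb in
set_option maxHeartbeats 2000000 in
lemma tensor_xy (x : 𝒳) (y : 𝒴) :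
    ∑' v : ℕ × ℕ, psi2 (Wm p x y * (qa x v.1 * qb x v.2))
        (Wm p x y * (cC p qa y v.1 * cC p qb y v.2))
      = (∑' u, psi2 (Wm p x y * qa x u) (Wm p x y * cC p qa y u))
        + ∑' u, psi2 (Wm p x y * qb x u) (Wm p x y * cC p qb y u) := by
  rcases eq_or_lt_of_le (Wm_nonneg hp0 x y) with hW | hW
  · rw [← hW]
    simp [psi2]
  have hb : 0 < pYm p y := lt_of_lt_of_le hW (Wm_le_pYm hp0 x y)
  -- pointwise tensor identity
  have EQ : ∀ v : ℕ × ℕ,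
      psi2 (Wm p x y * (qa x v.1 * qb x v.2))
          (Wm p x y * (cC p qa y v.1 * cC p qb y v.2))
        + Wm p x y / Real.log 2 * (cC p qa y v.1 * qb x v.2)
        + Wm p x y / Real.log 2 * (qa x v.1 * cC p qb y v.2)
      = qb x v.2 * psi2 (Wm p x y * qa x v.1) (Wm p x y * cC p qa y v.1)
        + qa x v.1 * psi2 (Wm p x y * qb x v.2) (Wm p x y * cC p qb y v.2)
        + Wm p x y / Real.log 2 * (cC p qa y v.1 * cC p qb y v.2)
        + Wm p x y / Real.log 2 * (qa x v.1 * qb x v.2) := by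
    intro v
    apply psi2_tensor (le_of_lt hW) (hqa.1 x _) (hqb.1 x _)
      (cC_nonneg hp0 hqa y _) (cC_nonneg hp0 hqb y _)
    · intro _ hq1
      have hr1 : 0 < pYUm p qa y v.1 :=
        lt_of_lt_of_le (mul_pos hW hq1) (wq_le_pYUm hp0 hqa x y v.1)
      rw [cC_def]; exact div_pos hr1 hb
    · intro _ hq2
      have hr2 : 0 < pYUm p qb y v.2 :=
        lt_of_lt_of_le (mul_pos hW hq2) (wq_le_pYUm hp0 hqb x y v.2)
      rw [cC_def]; exact div_pos hr2 hb
  -- summabilities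
  have sA := summable_psiCC hp0 hqa hqb x y
  have sP1 := summable_psiC hp0 hqa x y
  have sP2 := summable_psiC hp0 hqb x y
  have sc1 := summable_cC hp0 hqa y
  have sc2 := summable_cC hp0 hqb y
  have sq1 := summable_q hqa x
  have sq2 := summable_q hqb x
  have c10 := cC_nonneg hp0 hqa y
  have c20 := cC_nonneg hp0 hqb y
  have q10 := hqa.1 x
  have q20 := hqb.1 x
  have sB1 : Summable (fun v : ℕ × ℕ =>
      Wm p x y / Real.log 2 * (cC p qa y v.1 * qb x v.2)) :=
    (sc1.mul_of_nonneg sq2 c10 q20).mul_left _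
  have sB2 : Summable (fun v : ℕ × ℕ =>
      Wm p x y / Real.log 2 * (qa x v.1 * cC p qb y v.2)) :=
    (sq1.mul_of_nonneg sc2 q10 c20).mul_left _
  have sR1 : Summable (fun v : ℕ × ℕ =>
      qb x v.2 * psi2 (Wm p x y * qa x v.1) (Wm p x y * cC p qa y v.1)) := by
    have := sP1.mul_of_nonneg sq2 (psiC_nonneg hp0 hqa x y) q20
    exact this.congr fun v => mul_comm _ _
  have sR2 : Summable (fun v : ℕ × ℕ =>
      qa x v.1 * psi2 (Wm p x y * qb x v.2) (Wm p x y * cC p qb y v.2)) := by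
    have : Summable (fun v : ℕ × ℕ => qa x v.1
        * psi2 (Wm p x y * qb x v.2) (Wm p x y * cC p qb y v.2)) :=
      sq1.mul_of_nonneg sP2 q10 (psiC_nonneg hp0 hqb x y)
    exact this
  have sR3 : Summable (fun v : ℕ × ℕ =>
      Wm p x y / Real.log 2 * (cC p qa y v.1 * cC p qb y v.2)) :=
    (sc1.mul_of_nonneg sc2 c10 c20).mul_left _
  have sR4 : Summable (fun v : ℕ × ℕ =>
      Wm p x y / Real.log 2 * (qa x v.1 * qb x v.2)) :=
    (sq1.mul_of_nonneg sq2 q10 q20).mul_left _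
  -- tsum of both sides of EQ
  have hTS : (∑' v : ℕ × ℕ, psi2 (Wm p x y * (qa x v.1 * qb x v.2))
        (Wm p x y * (cC p qa y v.1 * cC p qb y v.2)))
      + Wm p x y / Real.log 2 + Wm p x y / Real.log 2
    = (∑' u, psi2 (Wm p x y * qa x u) (Wm p x y * cC p qa y u))
      + (∑' u, psi2 (Wm p x y * qb x u) (Wm p x y * cC p qb y u))
      + Wm p x y / Real.log 2 + Wm p x y / Real.log 2 := by
    have L := tsum_congr (L := SummationFilter.unconditional _) EQ
    rw [Summable.tsum_add (sA.add sB1) sB2, Summable.tsum_add sA sB1] at L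
    rw [Summable.tsum_add ((sR1.add sR2).add sR3) sR4, Summable.tsum_add (sR1.add sR2) sR3,
      Summable.tsum_add sR1 sR2] at L
    have e1 : ∑' v : ℕ × ℕ, Wm p x y / Real.log 2 * (cC p qa y v.1 * qb x v.2)
        = Wm p x y / Real.log 2 := by
      rw [tsum_mul_left, tsum_pair_mul sc1 sq2 c10 q20, tsum_cC hp0 hqa hb, hqb.2 x,
        one_mul, mul_one]
    have e2 : ∑' v : ℕ × ℕ, Wm p x y / Real.log 2 * (qa x v.1 * cC p qb y v.2)
        = Wm p x y / Real.log 2 := by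
      rw [tsum_mul_left, tsum_pair_mul sq1 sc2 q10 c20, tsum_cC hp0 hqb hb, hqa.2 x,
        one_mul, mul_one]
    have e3 : ∑' v : ℕ × ℕ, Wm p x y / Real.log 2 * (cC p qa y v.1 * cC p qb y v.2)
        = Wm p x y / Real.log 2 := by
      rw [tsum_mul_left, tsum_pair_mul sc1 sc2 c10 c20, tsum_cC hp0 hqa hb,
        tsum_cC hp0 hqb hb, one_mul, mul_one]
    have e4 : ∑' v : ℕ × ℕ, Wm p x y / Real.log 2 * (qa x v.1 * qb x v.2)
        = Wm p x y / Real.log 2 := by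
      rw [tsum_mul_left, tsum_pair_mul sq1 sq2 q10 q20, hqa.2 x, hqb.2 x,
        one_mul, mul_one]
    have e5 : ∑' v : ℕ × ℕ,
        qb x v.2 * psi2 (Wm p x y * qa x v.1) (Wm p x y * cC p qa y v.1)
        = ∑' u, psi2 (Wm p x y * qa x u) (Wm p x y * cC p qa y u) := by
      rw [tsum_congr (fun v : ℕ × ℕ => mul_comm (qb x v.2)
        (psi2 (Wm p x y * qa x v.1) (Wm p x y * cC p qa y v.1)))]
      rw [tsum_pair_mul sP1 sq2 (psiC_nonneg hp0 hqa x y) q20, hqb.2 x, mul_one]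
    have e6 : ∑' v : ℕ × ℕ,
        qa x v.1 * psi2 (Wm p x y * qb x v.2) (Wm p x y * cC p qb y v.2)
        = ∑' u, psi2 (Wm p x y * qb x u) (Wm p x y * cC p qb y u) := by
      rw [tsum_pair_mul sq1 sP2 q10 (psiC_nonneg hp0 hqb x y), hqa.2 x, one_mul]
    rw [e1, e2, e3, e4, e5, e6] at L
    linarith [L]
  linarith [hTS]

end Pair2

section Pair3

variable [Fintype 𝒮] [Fintype 𝒳] [Fintype 𝒴]
variable {p : 𝒮 × 𝒳 × 𝒴 → ℝ} {qa qb : 𝒳 → ℕ → ℝ}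
variable (hp0 : ∀ z, 0 ≤ p z) (hqa : IsCondPMF qa) (hqb : IsCondPMF qb)

include hp0 hqa hqb in
lemma Ev_nonneg (y : 𝒴) (v : ℕ × ℕ) :
    0 ≤ psi2 (Rv p qa qb y v) (pYm p y * (cC p qa y v.1 * cC p qb y v.2)) := by
  apply psi2_nonneg (Rv_nonneg hp0 hqa hqb y v)
    (mul_nonneg (pYm_nonneg hp0 y)
      (mul_nonneg (cC_nonneg hp0 hqa y _) (cC_nonneg hp0 hqb y _)))
  intro hg0
  rcases mul_eq_zero.mp hg0 with h | h
  · rw [← bCv_eq_Rv hp0 hqa hqb y v, h, zero_mul]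
  · rcases mul_eq_zero.mp h with h1 | h1
    · have h2 : pYUm p qa y v.1 = 0 := by rw [← bc_eq_pYUm hp0 hqa y v.1, h1, mul_zero]
      apply Finset.sum_eq_zero
      intro x' _
      have h3 := wq_le_pYUm hp0 hqa x' y v.1
      rw [h2] at h3
      have h4 : Wm p x' y * qa x' v.1 = 0 :=
        le_antisymm h3 (mul_nonneg (Wm_nonneg hp0 x' y) (hqa.1 x' _))
      calc Wm p x' y * (qa x' v.1 * qb x' v.2)
          = Wm p x' y * qa x' v.1 * qb x' v.2 := by ring
        _ = 0 := by rw [h4, zero_mul]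
    · have h2 : pYUm p qb y v.2 = 0 := by rw [← bc_eq_pYUm hp0 hqb y v.2, h1, mul_zero]
      apply Finset.sum_eq_zero
      intro x' _
      have h3 := wq_le_pYUm hp0 hqb x' y v.2
      rw [h2] at h3
      have h4 : Wm p x' y * qb x' v.2 = 0 :=
        le_antisymm h3 (mul_nonneg (Wm_nonneg hp0 x' y) (hqb.1 x' _))
      calc Wm p x' y * (qa x' v.1 * qb x' v.2)
          = Wm p x' y * qb x' v.2 * qa x' v.1 := by ring
        _ = 0 := by rw [h4, zero_mul]

include hp0 hqa hqb in
set_option maxHeartbeats 2000000 in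
lemma refchange_y (y : 𝒴) :
    ∑ x, ∑' v : ℕ × ℕ, psi2 (Wm p x y * (qa x v.1 * qb x v.2))
        (Wm p x y * Cv p qa qb y v)
      ≤ ∑ x, ∑' v : ℕ × ℕ, psi2 (Wm p x y * (qa x v.1 * qb x v.2))
        (Wm p x y * (cC p qa y v.1 * cC p qb y v.2)) := by
  have hb0 := pYm_nonneg hp0 y
  have key : ∀ v : ℕ × ℕ,
      ∑ x, psi2 (Wm p x y * (qa x v.1 * qb x v.2))
        (Wm p x y * (cC p qa y v.1 * cC p qb y v.2))
      = ∑ x, psi2 (Wm p x y * (qa x v.1 * qb x v.2)) (Wm p x y * Cv p qa qb y v)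
        + psi2 (Rv p qa qb y v) (pYm p y * (cC p qa y v.1 * cC p qb y v.2)) := by
    intro v
    have hQM : ∀ x, 0 < Wm p x y → 0 < qa x v.1 * qb x v.2
        → 0 < cC p qa y v.1 * cC p qb y v.2 := by
      intro x hW hq12
      have hb : 0 < pYm p y := lt_of_lt_of_le hW (Wm_le_pYm hp0 x y)
      have hq1 : 0 < qa x v.1 := by
        rcases eq_or_lt_of_le (hqa.1 x v.1) with h | h
        · rw [← h, zero_mul] at hq12; exact absurd hq12 (lt_irrefl 0)
        · exact h
      have hq2 : 0 < qb x v.2 := by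
        rcases eq_or_lt_of_le (hqb.1 x v.2) with h | h
        · rw [← h, mul_zero] at hq12; exact absurd hq12 (lt_irrefl 0)
        · exact h
      have hr1 : 0 < pYUm p qa y v.1 :=
        lt_of_lt_of_le (mul_pos hW hq1) (wq_le_pYUm hp0 hqa x y v.1)
      have hr2 : 0 < pYUm p qb y v.2 :=
        lt_of_lt_of_le (mul_pos hW hq2) (wq_le_pYUm hp0 hqb x y v.2)
      exact mul_pos (div_pos hr1 hb) (div_pos hr2 hb)
    have h := sumx_psi_change hp0 y (fun x => qa x v.1 * qb x v.2)
      (cC p qa y v.1 * cC p qb y v.2) (fun x => mul_nonneg (hqa.1 x _) (hqb.1 x _)) hQM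
    rw [h]
    rfl
  have sCv : ∀ x : 𝒳, Summable (fun v : ℕ × ℕ =>
      psi2 (Wm p x y * (qa x v.1 * qb x v.2)) (Wm p x y * Cv p qa qb y v)) :=
    fun x => summable_psiCv hp0 hqa hqb x y
  have sCC : ∀ x : 𝒳, Summable (fun v : ℕ × ℕ =>
      psi2 (Wm p x y * (qa x v.1 * qb x v.2))
        (Wm p x y * (cC p qa y v.1 * cC p qb y v.2))) :=
    fun x => summable_psiCC hp0 hqa hqb x y
  have sEv : Summable (fun v : ℕ × ℕ =>
      psi2 (Rv p qa qb y v) (pYm p y * (cC p qa y v.1 * cC p qb y v.2))) := by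
    have h1 : Summable (fun v : ℕ × ℕ =>
        (∑ x, psi2 (Wm p x y * (qa x v.1 * qb x v.2))
          (Wm p x y * (cC p qa y v.1 * cC p qb y v.2)))
        - ∑ x, psi2 (Wm p x y * (qa x v.1 * qb x v.2)) (Wm p x y * Cv p qa qb y v)) :=
      (summable_sum fun x _ => sCC x).sub (summable_sum fun x _ => sCv x)
    apply h1.congr
    intro v
    rw [key v]
    ring
  have hts : ∑ x, ∑' v : ℕ × ℕ, psi2 (Wm p x y * (qa x v.1 * qb x v.2))
        (Wm p x y * (cC p qa y v.1 * cC p qb y v.2))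
      = ∑ x, ∑' v : ℕ × ℕ, psi2 (Wm p x y * (qa x v.1 * qb x v.2))
          (Wm p x y * Cv p qa qb y v)
        + ∑' v : ℕ × ℕ, psi2 (Rv p qa qb y v)
            (pYm p y * (cC p qa y v.1 * cC p qb y v.2)) := by
    rw [← Summable.tsum_finsetSum fun x _ => sCC x, ← Summable.tsum_finsetSum fun x _ => sCv x]
    rw [tsum_congr key]
    exact Summable.tsum_add (summable_sum fun x _ => sCv x) sEv
  rw [hts]
  have : 0 ≤ ∑' v : ℕ × ℕ, psi2 (Rv p qa qb y v)
      (pYm p y * (cC p qa y v.1 * cC p qb y v.2)) :=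
    tsum_nonneg (Ev_nonneg hp0 hqa hqb y)
  linarith

include hp0 hqa hqb in
set_option maxHeartbeats 2000000 in
lemma Gr_pair_le : Gr p (qpair qa qb) ≤ Gr p qa + Gr p qb := by
  have hxy : ∀ (x : 𝒳) (y : 𝒴),
      ∑' u, psi2 (Wm p x y * qpair qa qb x u) (Wm p x y * cC p (qpair qa qb) y u)
      = ∑' v : ℕ × ℕ, psi2 (Wm p x y * (qa x v.1 * qb x v.2))
          (Wm p x y * Cv p qa qb y v) := by
    intro x y
    have h1 : ∀ u, psi2 (Wm p x y * qpair qa qb x u)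
        (Wm p x y * cC p (qpair qa qb) y u)
        = (fun v : ℕ × ℕ => psi2 (Wm p x y * (qa x v.1 * qb x v.2))
            (Wm p x y * Cv p qa qb y v)) (Nat.pairEquiv.symm u) := by
      intro u
      rw [cC_qpair]
      rfl
    exact (tsum_congr h1).trans (Equiv.tsum_eq Nat.pairEquiv.symm
      (fun v : ℕ × ℕ => psi2 (Wm p x y * (qa x v.1 * qb x v.2))
        (Wm p x y * Cv p qa qb y v)))
  rw [Gr, Gr, Gr]
  have step1 : ∑ x, ∑ y, ∑' u, psi2 (Wm p x y * qpair qa qb x u)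
        (Wm p x y * cC p (qpair qa qb) y u)
      = ∑ y, ∑ x, ∑' v : ℕ × ℕ, psi2 (Wm p x y * (qa x v.1 * qb x v.2))
          (Wm p x y * Cv p qa qb y v) := by
    rw [Finset.sum_comm]
    exact Finset.sum_congr rfl fun y _ => Finset.sum_congr rfl fun x _ => hxy x y
  rw [step1]
  have step2 : ∑ y, ∑ x, ∑' v : ℕ × ℕ, psi2 (Wm p x y * (qa x v.1 * qb x v.2))
        (Wm p x y * Cv p qa qb y v)
      ≤ ∑ y, ∑ x, ∑' v : ℕ × ℕ, psi2 (Wm p x y * (qa x v.1 * qb x v.2))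
        (Wm p x y * (cC p qa y v.1 * cC p qb y v.2)) :=
    Finset.sum_le_sum fun y _ => refchange_y hp0 hqa hqb y
  refine le_trans step2 ?_
  have step3 : ∑ y, ∑ x, ∑' v : ℕ × ℕ, psi2 (Wm p x y * (qa x v.1 * qb x v.2))
        (Wm p x y * (cC p qa y v.1 * cC p qb y v.2))
      = ∑ y, ∑ x, ((∑' u, psi2 (Wm p x y * qa x u) (Wm p x y * cC p qa y u))
        + ∑' u, psi2 (Wm p x y * qb x u) (Wm p x y * cC p qb y u)) :=
    Finset.sum_congr rfl fun y _ => Finset.sum_congr rfl fun x _ =>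
      tensor_xy hp0 hqa hqb x y
  rw [step3]
  rw [Finset.sum_comm (γ := 𝒴)]
  rw [← Finset.sum_add_distrib]
  apply le_of_eq
  apply Finset.sum_congr rfl
  intro x _
  rw [← Finset.sum_add_distrib]

end Pair3

section Dist

variable [Fintype 𝒮] [Fintype 𝒳] [Fintype 𝒴]
variable {p : 𝒮 × 𝒳 × 𝒴 → ℝ} {qa qb : 𝒳 → ℕ → ℝ}
variable (hp0 : ∀ z, 0 ≤ p z) (hqa : IsCondPMF qa) (hqb : IsCondPMF qb)

omit hp0 hqb in
include hqa in
lemma summable_qd {α : Type} [Fintype α] (x : 𝒳) (c : ℝ) (hc : 0 ≤ c)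
    (d : α → ℝ) (hd0 : ∀ z, 0 ≤ d z) (k : ℕ → α) :
    Summable (fun u => c * qa x u * d (k u)) := by
  apply Summable.of_nonneg_of_le
    (fun u => mul_nonneg (mul_nonneg hc (hqa.1 x u)) (hd0 _))
    (f := fun u => (c * ∑ z, d z) * qa x u)
  · intro u
    have hD : d (k u) ≤ ∑ z, d z :=
      Finset.single_le_sum (fun z _ => hd0 z) (Finset.mem_univ (k u))
    calc c * qa x u * d (k u) ≤ c * qa x u * ∑ z, d z :=
        mul_le_mul_of_nonneg_left hD (mul_nonneg hc (hqa.1 x u))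
      _ = (c * ∑ z, d z) * qa x u := by ring
  · exact (summable_q hqa x).mul_left _

include hp0 hqa hqb in
lemma EdX_pair [Fintype Xh] (d : 𝒳 × Xh → ℝ) (hd0 : ∀ z, 0 ≤ d z) (xh : ℕ × 𝒴 → Xh) :
    EdX p (qpair qa qb) d
      (fun uy => xh ((Nat.pairEquiv.symm uy.1).1, uy.2)) = EdX p qa d xh := by
  rw [EdX, EdX]
  apply Finset.sum_congr rfl; intro s _
  apply Finset.sum_congr rfl; intro x _
  apply Finset.sum_congr rfl; intro y _
  have h1 : ∀ u, p (s, x, y) * qpair qa qb x u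
        * d (x, xh ((Nat.pairEquiv.symm u).1, y))
      = (fun v : ℕ × ℕ => (p (s, x, y) * qa x v.1 * d (x, xh (v.1, y))) * qb x v.2)
          (Nat.pairEquiv.symm u) := by
    intro u
    show p (s, x, y) * (qa x _ * qb x _) * d _ = _
    ring
  rw [tsum_congr h1]
  rw [Equiv.tsum_eq Nat.pairEquiv.symm
    (fun v : ℕ × ℕ => (p (s, x, y) * qa x v.1 * d (x, xh (v.1, y))) * qb x v.2)]
  rw [tsum_pair_mul (summable_qd hqa x (p (s, x, y)) (hp0 _) d hd0 (fun u1 => (x, xh (u1, y))))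
    (summable_q hqb x)
    (fun u1 => mul_nonneg (mul_nonneg (hp0 _) (hqa.1 x u1)) (hd0 _)) (hqb.1 x),
    hqb.2 x, mul_one]

include hp0 hqa hqb in
lemma EdS_pair [Fintype Sh] (ds : 𝒮 × Sh → ℝ) (hd0 : ∀ z, 0 ≤ ds z) (sh : ℕ × 𝒴 → Sh) :
    EdS p (qpair qa qb) ds
      (fun uy => sh ((Nat.pairEquiv.symm uy.1).2, uy.2)) = EdS p qb ds sh := by
  rw [EdS, EdS]
  apply Finset.sum_congr rfl; intro s _
  apply Finset.sum_congr rfl; intro x _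
  apply Finset.sum_congr rfl; intro y _
  have h1 : ∀ u, p (s, x, y) * qpair qa qb x u
        * ds (s, sh ((Nat.pairEquiv.symm u).2, y))
      = (fun v : ℕ × ℕ => qa x v.1 * (p (s, x, y) * qb x v.2 * ds (s, sh (v.2, y))))
          (Nat.pairEquiv.symm u) := by
    intro u
    show p (s, x, y) * (qa x _ * qb x _) * ds _ = _
    ring
  rw [tsum_congr h1]
  rw [Equiv.tsum_eq Nat.pairEquiv.symm
    (fun v : ℕ × ℕ => qa x v.1 * (p (s, x, y) * qb x v.2 * ds (s, sh (v.2, y))))]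
  rw [tsum_pair_mul (summable_q hqa x)
    (summable_qd hqb x (p (s, x, y)) (hp0 _) ds hd0 (fun u2 => (s, sh (u2, y))))
    (hqa.1 x)
    (fun u2 => mul_nonneg (mul_nonneg (hp0 _) (hqb.1 x u2)) (hd0 _)),
    hqa.2 x, one_mul]

end Dist

/-- **Lemma 2 (upper bound).** For all `D, Ds ≥ 0` at which `R_WZ^X(D)` and `R_WZ^S(Ds)` are
finite (with real values `rX`, `rS`), `R_WZ(D, Ds) ≤ R_WZ^X(D) + R_WZ^S(Ds)`. -/
theorem RWZ_le_sum
    [Fintype 𝒮] [Fintype 𝒳] [Fintype 𝒴] [Fintype Sh] [Fintype Xh]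
    [Nonempty 𝒮] [Nonempty 𝒳] [Nonempty 𝒴] [Nonempty Sh] [Nonempty Xh]
    (p : 𝒮 × 𝒳 × 𝒴 → ℝ) (hp0 : ∀ z, 0 ≤ p z) (hp1 : ∑ z : 𝒮 × 𝒳 × 𝒴, p z = 1)
    (d : 𝒳 × Xh → ℝ) (hd0 : ∀ z, 0 ≤ d z)
    (ds : 𝒮 × Sh → ℝ) (hds0 : ∀ z, 0 ≤ ds z)
    (D Ds : ℝ) (hD : 0 ≤ D) (hDs : 0 ≤ Ds) (rX rS : ℝ)
    (hX : RWZX p d D = ((rX : ℝ) : EReal))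
    (hS : RWZS p ds Ds = ((rS : ℝ) : EReal)) :
    RWZ p d ds D Ds ≤ ((rX + rS : ℝ) : EReal) := by
  by_contra hcon
  push_neg at hcon
  obtain ⟨t, ht1, ht2⟩ := EReal.lt_iff_exists_real_btwn.mp hcon
  have htr : rX + rS < t := EReal.coe_lt_coe_iff.mp ht1
  set ε : ℝ := t - (rX + rS) with hε
  have hε0 : 0 < ε := by simp [hε]; linarith
  -- choose a near-optimal pair for the X-constraint
  have h1 : RWZX p d D < ((rX + ε / 2 : ℝ) : EReal) := by
    rw [hX]
    exact_mod_cast (by linarith : rX < rX + ε / 2)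
  rw [RWZX] at h1
  obtain ⟨r1, hr1mem, hr1lt⟩ := sInf_lt_iff.mp h1
  obtain ⟨qa, xh, hqa, hEdXa, hr1⟩ := hr1mem
  rw [hr1] at hr1lt
  have hva : IXU p qa - IUY p qa < rX + ε / 2 := EReal.coe_lt_coe_iff.mp hr1lt
  -- choose a near-optimal pair for the S-constraint
  have h2 : RWZS p ds Ds < ((rS + ε / 2 : ℝ) : EReal) := by
    rw [hS]
    exact_mod_cast (by linarith : rS < rS + ε / 2)
  rw [RWZS] at h2
  obtain ⟨r2, hr2mem, hr2lt⟩ := sInf_lt_iff.mp h2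
  obtain ⟨qb, sh, hqb, hEdSb, hr2⟩ := hr2mem
  rw [hr2] at hr2lt
  have hvb : IXU p qb - IUY p qb < rS + ε / 2 := EReal.coe_lt_coe_iff.mp hr2lt
  -- the product auxiliary variable
  have hqq : IsCondPMF (qpair qa qb) := qpair_pmf hqa hqb
  have hfeas : Feasible p d ds D Ds (qpair qa qb)
      (fun uy => xh ((Nat.pairEquiv.symm uy.1).1, uy.2))
      (fun uy => sh ((Nat.pairEquiv.symm uy.1).2, uy.2)) := by
    refine ⟨hqq, ?_, ?_⟩
    · rw [EdX_pair hp0 hqa hqb d hd0 xh]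
      exact hEdXa
    · rw [EdS_pair hp0 hqa hqb ds hds0 sh]
      exact hEdSb
  have hmem : ((IXU p (qpair qa qb) - IUY p (qpair qa qb) : ℝ) : EReal)
      ∈ { r : EReal | ∃ (q : 𝒳 → ℕ → ℝ) (xh : ℕ × 𝒴 → Xh) (sh : ℕ × 𝒴 → Sh),
        Feasible p d ds D Ds q xh sh ∧ r = ((IXU p q - IUY p q : ℝ) : EReal) } :=
    ⟨qpair qa qb, _, _, hfeas, rfl⟩
  have hle : RWZ p d ds D Ds
      ≤ ((IXU p (qpair qa qb) - IUY p (qpair qa qb) : ℝ) : EReal) := by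
    rw [RWZ]
    exact sInf_le hmem
  have hval : IXU p (qpair qa qb) - IUY p (qpair qa qb)
      ≤ (IXU p qa - IUY p qa) + (IXU p qb - IUY p qb) := by
    rw [objective_eq hp0 hp1 hqa, objective_eq hp0 hp1 hqb, objective_eq hp0 hp1 hqq]
    exact Gr_pair_le hp0 hqa hqb
  have hvalt : IXU p (qpair qa qb) - IUY p (qpair qa qb) ≤ t := by
    have : rX + ε / 2 + (rS + ε / 2) = t := by rw [hε]; ring
    linarith
  have : RWZ p d ds D Ds ≤ ((t : ℝ) : EReal) :=
    le_trans hle (EReal.coe_le_coe_iff.mpr hvalt)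
  exact absurd ht2 (not_lt.mpr this)

end Stmt5
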